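/- Let N ≥ 2, and let φ ∈ ℂ with φ ≠ 0 and φ⁴ ≠ 1. Let P ∈ ℂ[X₁,…,X_N] be a symmetric polynomial such that P(φx, φ⁻¹x, x₃, …, x_N) = 0 for all complex values of x, x₃, …, x_N. Then the product ∏_{1 ≤ k < l ≤ N} (X_k − φ²X_l)(X_l − φ²X_k) divides P in ℂ[X₁,…,X_N]. -/

import Mathlib

open MvPolynomial

/-- A symmetric polynomial vanishing at the fusion locus
`(φx, φ⁻¹x, …)` is divisible by `∏_{k<l} (X_k − φ²X_l)(X_l − φ²X_k)`. -/
theorem fusion_kernel_factorization (N : ℕ) (hN : 2 ≤ N) (φ : ℂ)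
    (hφ0 : φ ≠ 0) (hφ4 : φ ^ 4 ≠ 1)
    (P : MvPolynomial (Fin N) ℂ) (hsym : P.IsSymmetric)
    (hker : ∀ (x : ℂ) (v : Fin N → ℂ),
      eval (fun i : Fin N =>
        if i.val = 0 then φ * x else if i.val = 1 then φ⁻¹ * x else v i) P = 0) :
    (∏ p ∈ Finset.univ.filter (fun p : Fin N × Fin N => p.1 < p.2),
        ((X p.1 - C (φ ^ 2) * X p.2) * (X p.2 - C (φ ^ 2) * X p.1))) ∣ P := by
  classical
  set g : Fin N × Fin N → MvPolynomial (Fin N) ℂ :=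
    fun p => X p.1 - C (φ ^ 2) * X p.2 with hg
  have hφ2 : φ ^ 2 ≠ 0 := pow_ne_zero _ hφ0
  have hφ21 : φ ^ 2 ≠ 1 := by
    intro h; apply hφ4; rw [show (4 : ℕ) = 2 * 2 from rfl, pow_mul, h, one_pow]
  -- Step A: general vanishing on hyperplanes u i = φ² u j
  have hvan : ∀ (i j : Fin N), i ≠ j → ∀ u : Fin N → ℂ,
      u i = φ ^ 2 * u j → eval u P = 0 := by
    intro i j hij u hu
    set a : Fin N := ⟨0, by omega⟩
    set b : Fin N := ⟨1, by omega⟩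
    have hab : a ≠ b := by simp [a, b, Fin.ext_iff]
    set τ := Equiv.swap a i
    set c := τ.symm j with hc
    have hca : c ≠ a := by
      intro h
      apply hij
      have : τ c = j := Equiv.apply_symm_apply _ _
      rw [h, Equiv.swap_apply_left] at this
      rw [this]
    set σ := (Equiv.swap b c).trans τ with hσ
    have hσa : σ a = i := by
      simp [σ, Equiv.swap_apply_of_ne_of_ne hab (Ne.symm hca), τ, Equiv.swap_apply_left]
    have hσb : σ b = j := by
      simp [σ, Equiv.swap_apply_left, hc, τ]
    have h1 : eval u P = eval (u ∘ σ) P := by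
      conv_lhs => rw [← hsym σ]
      rw [eval_rename]
    rw [h1]
    have h2 := hker (φ * u j) (u ∘ σ)
    have h3 : (fun k : Fin N =>
        if k.val = 0 then φ * (φ * u j) else if k.val = 1 then φ⁻¹ * (φ * u j) else (u ∘ σ) k)
        = u ∘ σ := by
      funext k
      by_cases hk0 : k.val = 0
      · have : k = a := by simp [a, Fin.ext_iff, hk0]
        subst this
        simp [hk0, Function.comp, hσa, hu]
        ring
      · by_cases hk1 : k.val = 1
        · have : k = b := by simp [b, Fin.ext_iff, hk1]
          subst this
          simp [hk0, hk1, Function.comp, hσb]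
          field_simp
        · simp [hk0, hk1]
    rw [h3] at h2
    exact h2
  -- Step B: each linear factor divides P
  have hdvd : ∀ (i j : Fin N), i ≠ j → g (i, j) ∣ P := by
    intro i j hij
    set f : Fin N → MvPolynomial (Fin N) ℂ :=
      fun k => if k = i then C (φ ^ 2) * X j else X k with hfdef
    have h0 : aeval f P = 0 := by
      apply MvPolynomial.funext
      intro v
      rw [map_zero]
      have : eval v (aeval f P) = eval (fun k => eval v (f k)) P := by
        rw [aeval_def, algebraMap_eq, ← eval_assoc]
        rfl
      rw [this]
      apply hvan i j hij
      simp [f, hij, Ne.symm hij]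
    set I : Ideal (MvPolynomial (Fin N) ℂ) := Ideal.span {g (i, j)} with hI
    have key : (Ideal.Quotient.mkₐ ℂ I).comp (aeval f) = Ideal.Quotient.mkₐ ℂ I := by
      apply algHom_ext
      intro k
      simp only [AlgHom.comp_apply, aeval_X, Ideal.Quotient.mkₐ_eq_mk]
      by_cases hk : k = i
      · rw [Ideal.Quotient.eq]
        have h5 : f k = C (φ ^ 2) * X j := by simp [f, hk]
        rw [h5, hk]
        have : C (φ ^ 2) * X j - X i = -g (i, j) := by simp [hg]
        rw [this]
        exact I.neg_mem (Ideal.subset_span rfl)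
      · simp [f, hk]
    have hP0 : Ideal.Quotient.mk I P = 0 := by
      have := congrArg (fun (F : MvPolynomial (Fin N) ℂ →ₐ[ℂ] _) => F P) key
      simp only [AlgHom.comp_apply, Ideal.Quotient.mkₐ_eq_mk] at this
      rw [← this, h0, map_zero]
    exact (Ideal.mem_span_singleton).mp (Ideal.Quotient.eq_zero_iff_mem.mp hP0)
  -- Step C: each linear factor is prime
  have hprime : ∀ p : Fin N × Fin N, p.1 ≠ p.2 → Prime (g p) := by
    rintro ⟨i, j⟩ hij
    simp only at hij
    obtain ⟨n, rfl⟩ : ∃ n, N = n + 1 := ⟨N - 1, by omega⟩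
    have hXi : Prime (X i : MvPolynomial (Fin (n + 1)) ℂ) := by
      let e := (renameEquiv ℂ (Equiv.swap i 0)).trans (finSuccEquiv ℂ n)
      refine (MulEquiv.prime_iff e.toMulEquiv).mp ?_
      have : e.toMulEquiv (X i) = Polynomial.X := by
        simp [e, renameEquiv_apply, finSuccEquiv_X_zero]
      rw [this]
      exact Polynomial.prime_X
    let F : MvPolynomial (Fin (n + 1)) ℂ →ₐ[ℂ] MvPolynomial (Fin (n + 1)) ℂ :=
      aeval (fun k => if k = i then X i - C (φ ^ 2) * X j else X k)
    let G : MvPolynomial (Fin (n + 1)) ℂ →ₐ[ℂ] MvPolynomial (Fin (n + 1)) ℂ :=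
      aeval (fun k => if k = i then X i + C (φ ^ 2) * X j else X k)
    have hFG : F.comp G = AlgHom.id ℂ _ := by
      apply algHom_ext
      intro k
      by_cases hk : k = i
      · subst hk
        simp [F, G, Ne.symm hij, algebraMap_eq]
      · simp [F, G, hk]
    have hGF : G.comp F = AlgHom.id ℂ _ := by
      apply algHom_ext
      intro k
      by_cases hk : k = i
      · subst hk
        simp [F, G, Ne.symm hij, algebraMap_eq]
      · simp [F, G, hk]
    let e' : MvPolynomial (Fin (n + 1)) ℂ ≃ₐ[ℂ] MvPolynomial (Fin (n + 1)) ℂ :=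
      AlgEquiv.ofAlgHom F G hFG hGF
    have hpr := (MulEquiv.prime_iff e'.toMulEquiv).mpr hXi
    have he : e'.toMulEquiv (X i) = X i - C (φ ^ 2) * X j := by
      change F (X i) = _
      simp only [F, aeval_X, if_pos rfl, if_true]
    rwa [he] at hpr
  -- Step D: distinct factors are not associated (via evaluation)
  have hnass : ∀ p q : Fin N × Fin N, p.1 ≠ p.2 → q.1 ≠ q.2 → p ≠ q → ¬ (g p ∣ g q) := by
    rintro ⟨i, j⟩ ⟨k, l⟩ hp hq hpq hdv
    simp only at hp hq
    have key : ∃ v : Fin N → ℂ, eval v (g (i, j)) = 0 ∧ eval v (g (k, l)) ≠ 0 := by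
      by_cases hki : k = i
      · have hlj : l ≠ j := by
          intro h; exact hpq (by rw [Prod.ext_iff]; exact ⟨hki.symm, h.symm⟩)
        have hli : l ≠ i := by rw [← hki]; exact (Ne.symm hq)
        refine ⟨fun m => if m = i then φ ^ 2 else if m = j then 1 else 0, ?_, ?_⟩
        · simp [hg, Ne.symm hp]
        · simp only [hg, map_sub, map_mul, eval_C, eval_X]
          rw [if_pos hki, if_neg hli, if_neg hlj]
          intro h
          exact hφ2 (by linear_combination h)
      · by_cases hkj : k = j
        · by_cases hli : l = i
          · refine ⟨fun m => if m = i then φ ^ 2 else if m = j then 1 else 0, ?_, ?_⟩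
            · simp [hg, Ne.symm hp]
            · simp only [hg, map_sub, map_mul, eval_C, eval_X]
              rw [if_neg hki, if_pos hkj, if_pos hli]
              intro h
              exact hφ4 (by linear_combination -h)
          · have hlj : l ≠ j := by rw [← hkj]; exact (Ne.symm hq)
            refine ⟨fun m => if m = i then φ ^ 2 else if m = j then 1 else 0, ?_, ?_⟩
            · simp [hg, Ne.symm hp]
            · simp only [hg, map_sub, map_mul, eval_C, eval_X]
              rw [if_neg hki, if_pos hkj, if_neg hli, if_neg hlj]
              intro h
              exact one_ne_zero (by linear_combination h)
        · by_cases hli : l = i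
          · refine ⟨fun m => if m = i then φ ^ 2 else if m = j then 1 else 0, ?_, ?_⟩
            · simp [hg, Ne.symm hp]
            · simp only [hg, map_sub, map_mul, eval_C, eval_X]
              rw [if_neg hki, if_neg hkj, if_pos hli]
              intro h
              exact mul_ne_zero hφ2 hφ2 (by linear_combination -h)
          · by_cases hlj : l = j
            · refine ⟨fun m => if m = i then φ ^ 2 else if m = j then 1 else 0, ?_, ?_⟩
              · simp [hg, Ne.symm hp]
              · simp only [hg, map_sub, map_mul, eval_C, eval_X]
                rw [if_neg hki, if_neg hkj, if_neg hli, if_pos hlj]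
                intro h
                exact hφ2 (by linear_combination -h)
            · refine ⟨fun m => if m = i then φ ^ 2 else if m = j then 1 else 1, ?_, ?_⟩
              · simp [hg, Ne.symm hp]
              · simp only [hg, map_sub, map_mul, eval_C, eval_X]
                rw [if_neg hki, if_neg hkj, if_neg hli, if_neg hlj]
                intro h
                exact hφ21 (by linear_combination -h)
    obtain ⟨v, hv0, hvne⟩ := key
    obtain ⟨h, hh⟩ := hdv
    apply hvne
    rw [hh, map_mul, hv0, zero_mul]
  -- Assembly
  set S : Finset (Fin N × Fin N) :=
    Finset.univ.filter (fun p : Fin N × Fin N => p.1 ≠ p.2) with hS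
  have hProd : (∏ p ∈ Finset.univ.filter (fun p : Fin N × Fin N => p.1 < p.2),
      ((X p.1 - C (φ ^ 2) * X p.2) * (X p.2 - C (φ ^ 2) * X p.1)))
      = ∏ p ∈ S, g p := by
    have hsw : ∀ p : Fin N × Fin N, (X p.2 - C (φ ^ 2) * X p.1 : MvPolynomial (Fin N) ℂ)
        = g p.swap := by intro p; simp [hg]
    calc (∏ p ∈ Finset.univ.filter (fun p : Fin N × Fin N => p.1 < p.2),
        ((X p.1 - C (φ ^ 2) * X p.2) * (X p.2 - C (φ ^ 2) * X p.1)))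
        = ∏ p ∈ Finset.univ.filter (fun p : Fin N × Fin N => p.1 < p.2),
          (g p * g p.swap) := by
          apply Finset.prod_congr rfl
          intro p _
          rw [hsw]
      _ = (∏ p ∈ Finset.univ.filter (fun p : Fin N × Fin N => p.1 < p.2), g p) *
          (∏ p ∈ Finset.univ.filter (fun p : Fin N × Fin N => p.1 < p.2), g p.swap) :=
          Finset.prod_mul_distrib
      _ = (∏ p ∈ Finset.univ.filter (fun p : Fin N × Fin N => p.1 < p.2), g p) *
          (∏ p ∈ Finset.univ.filter (fun p : Fin N × Fin N => p.2 < p.1), g p) := by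
          congr 1
          refine Finset.prod_nbij' Prod.swap Prod.swap ?_ ?_ ?_ ?_ ?_ <;>
            simp [Prod.swap]
      _ = ∏ p ∈ S, g p := by
          rw [← Finset.prod_union]
          · apply Finset.prod_congr _ (fun _ _ => rfl)
            ext p
            simp only [Finset.mem_union, Finset.mem_filter, Finset.mem_univ, true_and, hS]
            constructor
            · rintro (h | h)
              · exact ne_of_lt h
              · exact (ne_of_lt h).symm
            · intro h
              exact lt_or_gt_of_ne h
          · rw [Finset.disjoint_left]
            intro p hp1 hp2
            simp only [Finset.mem_filter] at hp1 hp2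
            exact absurd hp2.2 (not_lt_of_gt hp1.2)
  rw [hProd]
  -- divisibility of the product via Associates
  have hinj : ∀ p ∈ S, ∀ q ∈ S, Associates.mk (g p) = Associates.mk (g q) → p = q := by
    intro p hp q hq hmk
    by_contra hne
    simp only [hS, Finset.mem_filter] at hp hq
    exact hnass p q hp.2 hq.2 hne
      (Associates.mk_eq_mk_iff_associated.mp hmk).dvd
  have h4 : ∏ a ∈ S.image (fun p => Associates.mk (g p)), a
      = ∏ p ∈ S, Associates.mk (g p) := Finset.prod_image hinj
  have h5 : (∏ a ∈ S.image (fun p => Associates.mk (g p)), a) ∣ Associates.mk P := by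
    refine Finset.prod_primes_dvd (M₀ := Associates (MvPolynomial (Fin N) ℂ)) _ ?_ ?_
    · intro a ha
      obtain ⟨p, hp, rfl⟩ := Finset.mem_image.mp ha
      simp only [hS, Finset.mem_filter] at hp
      exact Associates.prime_mk.mpr (hprime p hp.2)
    · intro a ha
      obtain ⟨p, hp, rfl⟩ := Finset.mem_image.mp ha
      simp only [hS, Finset.mem_filter] at hp
      exact Associates.mk_dvd_mk.mpr (hdvd p.1 p.2 hp.2)
  rw [h4] at h5
  have h6 : Associates.mk (∏ p ∈ S, g p) = ∏ p ∈ S, Associates.mk (g p) := by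
    rw [← Associates.mkMonoidHom_apply, map_prod]
    rfl
  rw [← h6] at h5
  exact Associates.mk_dvd_mk.mp h5
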